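/- Let a : ℕ → ℕ (indexed from 1) satisfy: a(1) = 1, a(2) = 2, and for every n ≥ 2, a(n+1) is the smallest positive integer not among a(1), …, a(n) whose greatest common divisor with a(n) exceeds 1. If p is a prime such that every positive multiple of p occurs as a term of the sequence, then every positive integer occurs as a term of the sequence. -/
import Mathlib


/-- The EKG sequence property: `a 1 = 1`, `a 2 = 2`, and for `n ≥ 2`,
`a (n+1)` is the smallest positive integer not among `a 1, …, a n`
whose gcd with `a n` exceeds 1. -/
def IsEKG (a : ℕ → ℕ) : Prop :=
  a 1 = 1 ∧ a 2 = 2 ∧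
    ∀ n, 2 ≤ n →
      IsLeast {m : ℕ | 0 < m ∧ (∀ i, 1 ≤ i → i ≤ n → a i ≠ m) ∧
        1 < Nat.gcd m (a n)} (a (n + 1))

theorem ekg_all_numbers_of_multiples (a : ℕ → ℕ) (ha : IsEKG a) (p : ℕ) (hp : p.Prime)
    (hall : ∀ k : ℕ, 1 ≤ k → ∃ n : ℕ, 1 ≤ n ∧ a n = k * p) :
    ∀ m : ℕ, 1 ≤ m → ∃ n : ℕ, 1 ≤ n ∧ a n = m := by
  obtain ⟨h1, h2, h3⟩ := ha
  -- injectivity of the sequence on indices ≥ 1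
  have hinj : ∀ i j : ℕ, 1 ≤ i → i < j → a i ≠ a j := by
    intro i j hi hij
    rcases Nat.lt_or_ge j 3 with hj | hj
    · have hj2 : j = 2 := by omega
      have hi1 : i = 1 := by omega
      rw [hj2, hi1, h1, h2]; omega
    · have hn : 2 ≤ j - 1 := by omega
      have := (h3 (j - 1) hn).1.2.1 i hi (by omega)
      have hj1 : j - 1 + 1 = j := by omega
      rw [hj1] at this
      exact this
  intro m hm
  by_contra hno
  push_neg at hno
  have hm2 : 2 ≤ m := by
    rcases Nat.lt_or_ge m 2 with h | h
    · exfalso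
      have hm1 : m = 1 := by omega
      exact hno 1 le_rfl (by rw [h1, hm1])
    · exact h
  have hp2 : 2 ≤ p := hp.two_le
  have hall' : ∀ k : ℕ, ∃ n : ℕ, 1 ≤ n ∧ a n = (k + 1) * p := fun k => hall (k + 1) (by omega)
  choose N hN1 hN2 using hall'
  -- for j ≥ 1, the term after a (N (j*m-1)) = j*m*p lies in [1, m-1]
  have key : ∀ j, 1 ≤ j →
      1 ≤ a (N (j * m - 1) + 1) ∧ a (N (j * m - 1) + 1) ≤ m - 1 := by
    intro j hj
    set n := N (j * m - 1) with hn
    have hjm : 1 ≤ j * m := Nat.one_le_iff_ne_zero.mpr (by positivity)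
    have han : a n = j * m * p := by
      have := hN2 (j * m - 1)
      rwa [Nat.sub_add_cancel hjm] at this
    have h4 : 4 ≤ j * m * p := by
      calc (4 : ℕ) = 1 * 2 * 2 := by norm_num
      _ ≤ j * m * p := Nat.mul_le_mul (Nat.mul_le_mul hj hm2) hp2
    have hn2 : 2 ≤ n := by
      rcases Nat.lt_or_ge n 2 with h | h
      · exfalso
        have hn1 : 1 ≤ n := hN1 _
        have : n = 1 := by omega
        rw [this, h1] at han
        omega
      · exact h
    have hL := h3 n hn2
    have hmem : m ∈ {x : ℕ | 0 < x ∧ (∀ i, 1 ≤ i → i ≤ n → a i ≠ x) ∧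
        1 < Nat.gcd x (a n)} := by
      refine ⟨by omega, fun i hi _ => hno i hi, ?_⟩
      rw [han]
      have heq : j * m * p = m * (j * p) := by ring
      rw [heq, Nat.gcd_eq_left (dvd_mul_right m (j * p))]
      omega
    have hle : a (n + 1) ≤ m := hL.2 hmem
    have hpos : 0 < a (n + 1) := hL.1.1
    have hne : a (n + 1) ≠ m := hno (n + 1) (by omega)
    omega
  -- pigeonhole
  have hmap : ∀ j ∈ Finset.Icc 1 m, a (N (j * m - 1) + 1) ∈ Finset.Icc 1 (m - 1) := by
    intro j hj
    rw [Finset.mem_Icc] at hj ⊢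
    exact key j hj.1
  have hginj : Set.InjOn (fun j => a (N (j * m - 1) + 1)) (Finset.Icc 1 m) := by
    intro j hj j' hj' heq
    simp only [Finset.coe_Icc, Set.mem_Icc] at hj hj'
    by_contra hne
    -- indices N (j*m-1) and N (j'*m-1) are distinct
    have hjm : 1 ≤ j * m := Nat.one_le_iff_ne_zero.mpr (Nat.mul_ne_zero (by omega) (by omega))
    have hjm' : 1 ≤ j' * m := Nat.one_le_iff_ne_zero.mpr (Nat.mul_ne_zero (by omega) (by omega))
    have han : a (N (j * m - 1)) = j * m * p := by
      have := hN2 (j * m - 1); rwa [Nat.sub_add_cancel hjm] at this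
    have han' : a (N (j' * m - 1)) = j' * m * p := by
      have := hN2 (j' * m - 1); rwa [Nat.sub_add_cancel hjm'] at this
    have hvne : j * m * p ≠ j' * m * p := by
      intro h
      have hp0 : 0 < p := by omega
      have hm0 : 0 < m := by omega
      have : j = j' := by
        have := Nat.eq_of_mul_eq_mul_right hp0 h
        exact Nat.eq_of_mul_eq_mul_right hm0 this
      exact hne this
    have hNne : N (j * m - 1) ≠ N (j' * m - 1) := by
      intro h; apply hvne; rw [← han, ← han', h]
    rcases Nat.lt_or_ge (N (j * m - 1)) (N (j' * m - 1)) with h | h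
    · exact hinj (N (j * m - 1) + 1) (N (j' * m - 1) + 1) (by omega) (by omega) heq
    · have h' : N (j' * m - 1) < N (j * m - 1) := by omega
      exact hinj (N (j' * m - 1) + 1) (N (j * m - 1) + 1) (by omega) (by omega) heq.symm
  have hcard := Finset.card_le_card_of_injOn _ hmap hginj
  rw [Nat.card_Icc, Nat.card_Icc] at hcard
  omega
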